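/- For real h and real r with β = 0 if r ≥ 0 and β = 1/2 if r < 0, Owen's identity holds: T(h, r) + T(rh, 1/r) = (Φ(h) + Φ(rh))/2 − Φ(h)Φ(rh) − β (for r ≠ 0). -/

import Mathlib

open Real MeasureTheory intervalIntegral Set

/-- Owen's T function. -/
noncomputable def OwenT (h a : ℝ) : ℝ :=
  (1 / (2 * Real.pi)) * ∫ x in (0:ℝ)..a, Real.exp (-h ^ 2 * (1 + x ^ 2) / 2) / (1 + x ^ 2)

/-- Standard normal cdf. -/
noncomputable def stdCdf (x : ℝ) : ℝ :=
  ∫ t in Set.Iic x, Real.exp (-t ^ 2 / 2) / Real.sqrt (2 * Real.pi)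

noncomputable def phi (t : ℝ) : ℝ := Real.exp (-t ^ 2 / 2) / Real.sqrt (2 * Real.pi)

lemma phi_cont : Continuous phi := by
  unfold phi; fun_prop

lemma gauss_integrable : Integrable (fun t : ℝ => Real.exp (-t ^ 2 / 2)) := by
  have := integrable_exp_neg_mul_sq (by norm_num : (0:ℝ) < 1/2)
  convert this using 2 with t
  ring_nf

lemma phi_integrable : Integrable phi := gauss_integrable.div_const _

lemma stdCdf_eq (x : ℝ) : stdCdf x = ∫ t in Set.Iic x, phi t := rfl

lemma stdCdf_sub (a b : ℝ) : stdCdf b - stdCdf a = ∫ t in a..b, phi t := by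
  rw [stdCdf_eq, stdCdf_eq]
  exact integral_Iic_sub_Iic phi_integrable.integrableOn phi_integrable.integrableOn

lemma stdCdf_zero : stdCdf 0 = 1 / 2 := by
  have h1 : (∫ t in Set.Iic (0:ℝ), phi t) = ∫ t in Set.Ioi (0:ℝ), phi t := by
    rw [show (∫ t in Set.Ioi (0:ℝ), phi t) = ∫ t in Set.Iic (0:ℝ), phi (-t) by
      rw [integral_comp_neg_Iic]; norm_num]
    congr 1 with t
    unfold phi
    rw [neg_pow]
    norm_num
  have h2 : stdCdf 0 + stdCdf 0 = ∫ t : ℝ, phi t := by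
    rw [stdCdf_eq]
    nth_rewrite 2 [h1]
    exact integral_Iic_add_Ioi phi_integrable.integrableOn phi_integrable.integrableOn
  have h3 : (∫ t : ℝ, phi t) = 1 := by
    unfold phi
    rw [MeasureTheory.integral_div]
    have : (∫ t : ℝ, Real.exp (-t ^ 2 / 2)) = Real.sqrt (2 * π) := by
      have := integral_gaussian (1/2)
      rw [show π / (1/2) = 2 * π by ring] at this
      rw [← this]
      congr 1 with t
      ring_nf
    rw [this, div_self (by positivity)]
  linarith [h2.trans h3]

lemma hasDerivAt_stdCdf (x : ℝ) : HasDerivAt stdCdf (phi x) x := by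
  have key : stdCdf = fun u => stdCdf 0 + ∫ t in (0:ℝ)..u, phi t := by
    funext u
    rw [← stdCdf_sub]; ring
  rw [key]
  have : HasDerivAt (fun u => ∫ t in (0:ℝ)..u, phi t) (phi x) x :=
    integral_hasDerivAt_right (phi_cont.intervalIntegrable _ _)
      (phi_cont.stronglyMeasurableAtFilter _ _) phi_cont.continuousAt
  simpa using this.const_add (stdCdf 0)

lemma cont_integrand (h : ℝ) :
    Continuous fun x : ℝ => Real.exp (-h ^ 2 * (1 + x ^ 2) / 2) / (1 + x ^ 2) := by
  apply Continuous.div (by fun_prop) (by fun_prop)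
  intro x; positivity

lemma hasDerivAt_OwenT (a h : ℝ) :
    HasDerivAt (fun h => OwenT h a) (-phi h * (stdCdf (a * h) - stdCdf 0)) h := by
  have key := (intervalIntegral.hasDerivAt_integral_of_dominated_loc_of_deriv_le
      (F := fun h x => Real.exp (-h ^ 2 * (1 + x ^ 2) / 2) / (1 + x ^ 2))
      (F' := fun h x => -h * Real.exp (-h ^ 2 * (1 + x ^ 2) / 2))
      (x₀ := h) (a := 0) (b := a) (bound := fun _ => |h| + 1) (μ := volume) (s := Metric.ball h 1)
      (Metric.ball_mem_nhds h one_pos)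
      (Filter.Eventually.of_forall fun h' => (cont_integrand h').aestronglyMeasurable)
      ((cont_integrand h).intervalIntegrable _ _)
      ((by fun_prop : Continuous fun x : ℝ =>
         -h * Real.exp (-h ^ 2 * (1 + x ^ 2) / 2)).aestronglyMeasurable)
      (Filter.Eventually.of_forall fun t _ x hx => by
        have hx1 : |x| ≤ |h| + 1 := by
          have := abs_sub_abs_le_abs_sub x h
          have h2 : |x - h| < 1 := by simpa [Metric.mem_ball, Real.dist_eq] using hx
          linarith
        have he : Real.exp (-x ^ 2 * (1 + t ^ 2) / 2) ≤ 1 := by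
          apply Real.exp_le_one_iff.mpr
          nlinarith [sq_nonneg x, sq_nonneg t, sq_nonneg (x * t)]
        have hpos : (0:ℝ) < Real.exp (-x ^ 2 * (1 + t ^ 2) / 2) := Real.exp_pos _
        calc ‖-x * Real.exp (-x ^ 2 * (1 + t ^ 2) / 2)‖
            = |x| * Real.exp (-x ^ 2 * (1 + t ^ 2) / 2) := by
              rw [norm_mul, norm_neg, Real.norm_eq_abs, Real.norm_eq_abs,
                abs_of_pos hpos]
          _ ≤ (|h| + 1) * 1 := by
              apply mul_le_mul hx1 he hpos.le (by positivity)
          _ = |h| + 1 := by ring)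
      (intervalIntegrable_const)
      (Filter.Eventually.of_forall fun t _ x _ => by
        have h1 : HasDerivAt (fun x : ℝ => -x ^ 2 * (1 + t ^ 2) / 2)
            (-x * (1 + t ^ 2)) x := by
          have := (hasDerivAt_pow 2 x).const_mul (-(1 + t ^ 2) / 2)
          convert this using 1
          · exact rfl
          · exact rfl
          · funext y; ring
          · ring
        have h2 := (h1.exp).div_const (1 + t ^ 2)
        convert h2 using 1
        · exact rfl
        have ht : (1 : ℝ) + t ^ 2 ≠ 0 := by positivity
        field_simp)).2
  have key2 := key.const_mul (1 / (2 * π))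
  rw [show (fun h => OwenT h a) = fun h : ℝ => (1 / (2 * π)) *
      ∫ x in (0:ℝ)..a, Real.exp (-h ^ 2 * (1 + x ^ 2) / 2) / (1 + x ^ 2) from rfl]
  convert key2 using 1
  · exact rfl
  · exact rfl
  -- value identification
  have factor : (∫ x in (0:ℝ)..a, -h * Real.exp (-h ^ 2 * (1 + x ^ 2) / 2))
      = (-h * Real.exp (-h ^ 2 / 2)) * ∫ x in (0:ℝ)..a, Real.exp (-(h * x) ^ 2 / 2) := by
    rw [← intervalIntegral.integral_const_mul]
    congr 1 with x
    rw [mul_assoc, ← Real.exp_add]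
    congr 2
    ring
  by_cases h0 : h = 0
  · subst h0
    simp [phi]
  · have sub1 : (∫ x in (0:ℝ)..a, Real.exp (-(h * x) ^ 2 / 2))
        = h⁻¹ • ∫ u in (h * 0)..(h * a), Real.exp (-u ^ 2 / 2) :=
      intervalIntegral.integral_comp_mul_left (fun u => Real.exp (-u ^ 2 / 2)) h0
    have sub2 : (∫ u in (0:ℝ)..(h * a), Real.exp (-u ^ 2 / 2))
        = Real.sqrt (2 * π) * (stdCdf (h * a) - stdCdf 0) := by
      rw [stdCdf_sub]
      unfold phi
      rw [intervalIntegral.integral_div]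
      rw [mul_div_cancel₀ _ (by positivity : Real.sqrt (2 * π) ≠ 0)]
    rw [factor, sub1, mul_zero, sub2]
    unfold phi
    set s := Real.sqrt (2 * π) with hsdef
    have hs : s * s = 2 * π := Real.mul_self_sqrt (by positivity)
    have hss : s ≠ 0 := by rw [hsdef]; positivity
    rw [mul_comm a h, smul_eq_mul, ← hs]
    field_simp

lemma OwenT_zero (a : ℝ) : OwenT 0 a = Real.arctan a / (2 * π) := by
  unfold OwenT
  have : (fun x : ℝ => Real.exp (-(0:ℝ) ^ 2 * (1 + x ^ 2) / 2) / (1 + x ^ 2))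
      = fun x : ℝ => ((1:ℝ) + x ^ 2)⁻¹ := by
    funext x; norm_num
  rw [this, integral_inv_one_add_sq, Real.arctan_zero, sub_zero]
  ring

theorem owen_identity (h r : ℝ) (hr : r ≠ 0) :
    OwenT h r + OwenT (r * h) (1 / r) =
      (stdCdf h + stdCdf (r * h)) / 2 - stdCdf h * stdCdf (r * h) -
        (if 0 ≤ r then (0:ℝ) else 1 / 2) := by
  have s0 : stdCdf 0 = 1 / 2 := stdCdf_zero
  set f : ℝ → ℝ := fun h => OwenT h r + OwenT (r * h) (1 / r) -
    ((stdCdf h + stdCdf (r * h)) / 2 - stdCdf h * stdCdf (r * h)) with hf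
  have hderiv : ∀ x : ℝ, HasDerivAt f 0 x := by
    intro x
    have drh : HasDerivAt (fun h : ℝ => r * h) r x := by
      simpa using (hasDerivAt_id x).const_mul r
    have d1 : HasDerivAt (fun h => OwenT h r) (-phi x * (stdCdf (r * x) - stdCdf 0)) x :=
      hasDerivAt_OwenT r x
    have d2 : HasDerivAt (fun h => OwenT (r * h) (1 / r))
        ((-phi (r * x) * (stdCdf ((1 / r) * (r * x)) - stdCdf 0)) * r) x :=
      (hasDerivAt_OwenT (1 / r) (r * x)).comp x drh
    have d3 : HasDerivAt stdCdf (phi x) x := hasDerivAt_stdCdf x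
    have d4 : HasDerivAt (fun h => stdCdf (r * h)) (phi (r * x) * r) x :=
      (hasDerivAt_stdCdf (r * x)).comp x drh
    have := (d1.add d2).sub (((d3.add d4).div_const 2).sub (d3.mul d4))
    convert this using 1
    · exact rfl
    · exact rfl
    · exact rfl
    have hx : (1 / r) * (r * x) = x := by field_simp
    rw [hx, s0]
    ring
  have key : f h = f 0 :=
    is_const_of_deriv_eq_zero (fun x => (hderiv x).differentiableAt)
      (fun x => (hderiv x).deriv) h 0
  have f0val : f 0 = -(if 0 ≤ r then (0:ℝ) else 1 / 2) := by
    have hπ : π ≠ 0 := Real.pi_ne_zero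
    simp only [hf, mul_zero, OwenT_zero, s0, one_div]
    rcases lt_or_ge r 0 with hneg | hpos
    · rw [if_neg (not_le.mpr hneg), Real.arctan_inv_of_neg hneg]
      field_simp
      ring
    · have hrpos : 0 < r := lt_of_le_of_ne hpos (Ne.symm hr)
      rw [if_pos hpos, Real.arctan_inv_of_pos hrpos]
      field_simp
      ring
  have final : f h = -(if 0 ≤ r then (0:ℝ) else 1 / 2) := key.trans f0val
  simp only [hf] at final
  linarith
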